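/- Let p be a prime and let λ = (λ_1, …, λ_n) and μ = (μ_1, …, μ_m) be partitions (with all parts ≥ 1) such that N_k(λ; p) = N_k(μ; p) for every k ≥ 0, i.e., ζ_λ(s) = ζ_μ(s) for the zeta functions of the abelian p-groups G_λ(p) and G_μ(p). Then λ = μ. -/

import Mathlib

/-- `Nk p l k` is the number of subgroups of order `p^k` of the abelian `p`-group
`G_λ(p) = ℤ/p^{λ_1}ℤ × ⋯ × ℤ/p^{λ_n}ℤ`, where `λ` is given by the list `l`
(so the zeta function of `λ` is `ζ_λ(s) = Σ_k N_k(λ; p) p^{-ks}`). -/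
noncomputable def Nk (p : ℕ) (l : List ℕ) (k : ℕ) : ℕ :=
  Nat.card {H : AddSubgroup (∀ i : Fin l.length, ZMod (p ^ l.get i)) // Nat.card H = p ^ k}




open AddSubgroup

/-- The `n`-torsion subgroup. -/
def aTors (n : ℕ) (G : Type*) [AddCommGroup G] : AddSubgroup G where
  carrier := {x | n • x = 0}
  zero_mem' := by simp
  add_mem' := by
    intro a b ha hb
    simp only [Set.mem_setOf_eq] at *
    rw [smul_add, ha, hb, add_zero]
  neg_mem' := by
    intro a ha
    simp only [Set.mem_setOf_eq] at *
    rw [smul_neg, ha, neg_zero]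

lemma mem_aTors {G : Type*} [AddCommGroup G] {n : ℕ} {x : G} :
    x ∈ aTors n G ↔ n • x = 0 := Iff.rfl

/-- number of subgroups of given cardinality -/
noncomputable def nkk (G : Type*) [AddCommGroup G] (c : ℕ) : ℕ :=
  Nat.card {H : AddSubgroup G // Nat.card H = c}

def subgroupCardEquiv {G G' : Type*} [AddCommGroup G] [AddCommGroup G'] (e : G ≃+ G') (c : ℕ) :
    {H : AddSubgroup G // Nat.card H = c} ≃ {H : AddSubgroup G' // Nat.card H = c} where
  toFun H := ⟨H.1.map e.toAddMonoidHom, by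
    rw [(Nat.card_congr (AddSubgroup.equivMapOfInjective H.1 e.toAddMonoidHom
      e.injective).toEquiv).symm]
    exact H.2⟩
  invFun H := ⟨H.1.map e.symm.toAddMonoidHom, by
    rw [(Nat.card_congr (AddSubgroup.equivMapOfInjective H.1 e.symm.toAddMonoidHom
      e.symm.injective).toEquiv).symm]
    exact H.2⟩
  left_inv H := by
    ext x
    simp [AddSubgroup.map_map]
  right_inv H := by
    ext x
    simp [AddSubgroup.map_map]

lemma nkk_congr {G G' : Type*} [AddCommGroup G] [AddCommGroup G'] (e : G ≃+ G') (c : ℕ) :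
    nkk G c = nkk G' c := Nat.card_congr (subgroupCardEquiv e c)

def zmodCongr {a b : ℕ} (h : a = b) : ZMod a ≃+ ZMod b := by subst h; exact AddEquiv.refl _

lemma zmodCongr_self {a : ℕ} (h : a = a) (x : ZMod a) : zmodCongr h x = x := rfl

lemma zmodCongr_zmodCongr {a b c : ℕ} (h1 : a = b) (h2 : b = c) (x : ZMod a) :
    zmodCongr h2 (zmodCongr h1 x) = zmodCongr (h1.trans h2) x := by subst h1; subst h2; rfl

abbrev Gl (p : ℕ) (l : List ℕ) := ∀ i : Fin l.length, ZMod (p ^ l.get i)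



lemma zmod_cast_smul {N : ℕ} (u w : ℕ) :
    u • ((w : ℕ) : ZMod N) = ((u * w : ℕ) : ZMod N) := by
  rw [nsmul_eq_mul, Nat.cast_mul]

lemma zmod_tors_hom {p : ℕ} (hp : p.Prime) (a j : ℕ) :
    ∃ χ : ZMod (p ^ min a j) →+ ZMod (p ^ a),
      Function.Injective χ ∧ ∀ x : ZMod (p ^ a), (∃ y, χ y = x) ↔ (p ^ j) • x = 0 := by
  haveI : NeZero (p ^ a) := ⟨pow_ne_zero _ hp.ne_zero⟩
  haveI : NeZero (p ^ min a j) := ⟨pow_ne_zero _ hp.ne_zero⟩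
  set b := min a j with hb
  have hba : b ≤ a := min_le_left _ _
  have hbj : b ≤ j := min_le_right _ _
  set c : ZMod (p ^ a) := ((p ^ (a - b) : ℕ) : ZMod (p ^ a)) with hc
  have hpow : p ^ b * p ^ (a - b) = p ^ a := by
    rw [← pow_add, Nat.add_sub_cancel' hba]
  have hf0 : (zmultiplesHom (ZMod (p ^ a)) c) ((p ^ b : ℕ) : ℤ) = 0 := by
    show ((p ^ b : ℕ) : ℤ) • c = 0
    rw [natCast_zsmul, hc, zmod_cast_smul, hpow, ZMod.natCast_self]
  set χ : ZMod (p ^ b) →+ ZMod (p ^ a) :=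
    ZMod.lift (p ^ b) ⟨zmultiplesHom (ZMod (p ^ a)) c, hf0⟩ with hχ
  have hχv : ∀ v : ℕ, χ ((v : ℕ) : ZMod (p ^ b)) = ((v * p ^ (a - b) : ℕ) : ZMod (p ^ a)) := by
    intro v
    have h1 : ((v : ℕ) : ZMod (p ^ b)) = ((v : ℤ) : ZMod (p ^ b)) := by push_cast; rfl
    rw [h1, hχ, ZMod.lift_coe]
    show (v : ℤ) • c = _
    rw [natCast_zsmul, hc, zmod_cast_smul]
  have hχx : ∀ x : ZMod (p ^ b), χ x = ((x.val * p ^ (a - b) : ℕ) : ZMod (p ^ a)) := by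
    intro x
    conv_lhs => rw [← ZMod.natCast_zmod_val x]
    exact hχv x.val
  refine ⟨χ, ?_, ?_⟩
  · rw [injective_iff_map_eq_zero]
    intro x hx
    rw [hχx, ZMod.natCast_eq_zero_iff] at hx
    rw [← hpow] at hx
    have h2 : p ^ b ∣ x.val :=
      (Nat.mul_dvd_mul_iff_right (pow_pos hp.pos (a - b))).mp hx
    have h3 : x.val = 0 := Nat.eq_zero_of_dvd_of_lt h2 (ZMod.val_lt x)
    rw [← ZMod.natCast_zmod_val x, h3, Nat.cast_zero]
  · intro x
    constructor
    · rintro ⟨y, rfl⟩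
      rw [hχx, zmod_cast_smul]
      rw [ZMod.natCast_eq_zero_iff]
      have h4 : p ^ a ∣ p ^ j * p ^ (a - b) := by
        rw [← pow_add]
        exact pow_dvd_pow p (by omega)
      have h5 : p ^ j * (y.val * p ^ (a - b)) = y.val * (p ^ j * p ^ (a - b)) := by ring
      rw [h5]
      exact Dvd.dvd.mul_left h4 y.val
    · intro hx
      have hdvd : p ^ a ∣ p ^ j * x.val := by
        rw [← ZMod.natCast_eq_zero_iff, ← zmod_cast_smul, ZMod.natCast_zmod_val]
        exact hx
      have h2 : p ^ (a - b) ∣ x.val := by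
        rcases Nat.le_total a j with haj | hja
        · have : b = a := by omega
          simp [this]
        · have hbj' : b = j := min_eq_right hja
          have h6 : p ^ j * p ^ (a - j) ∣ p ^ j * x.val := by
            rwa [← pow_add, Nat.add_sub_cancel' hja]
          have := (Nat.mul_dvd_mul_iff_left (pow_pos hp.pos j)).mp h6
          rwa [hbj']
      refine ⟨((x.val / p ^ (a - b) : ℕ) : ZMod (p ^ b)), ?_⟩
      rw [hχv, Nat.div_mul_cancel h2, ZMod.natCast_zmod_val]

lemma get_map_min {l : List ℕ} {f : ℕ → ℕ} (i : Fin (l.map f).length) :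
    (l.map f).get i = f (l.get (Fin.cast (l.length_map f) i)) := by
  simp [List.get_eq_getElem]

def piReindex (p : ℕ) (l : List ℕ) (f : ℕ → ℕ) :
    (∀ i : Fin l.length, ZMod (p ^ f (l.get i))) ≃+ Gl p (l.map f) where
  toFun x i := zmodCongr (congrArg (p ^ ·) (get_map_min i).symm) (x (Fin.cast (l.length_map f) i))
  invFun y i := zmodCongr (congrArg (p ^ ·) (get_map_min (Fin.cast (l.length_map f).symm i)))
      (y (Fin.cast (l.length_map f).symm i))
  left_inv x := by
    funext i
    show zmodCongr _ (zmodCongr _ _) = x i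
    rw [zmodCongr_zmodCongr]
    exact zmodCongr_self _ _
  right_inv y := by
    funext i
    show zmodCongr _ (zmodCongr _ _) = y i
    rw [zmodCongr_zmodCongr]
    exact zmodCongr_self _ _
  map_add' x y := by
    funext i
    exact map_add (zmodCongr _) _ _

lemma omega_iso {p : ℕ} (hp : p.Prime) (l : List ℕ) (j : ℕ) :
    Nonempty ((aTors (p ^ j) (Gl p l)) ≃+ Gl p (l.map (fun a => min a j))) := by
  choose χ hχinj hχrange using fun i : Fin l.length => zmod_tors_hom hp (l.get i) j
  let Ψ : (∀ i : Fin l.length, ZMod (p ^ min (l.get i) j)) →+ Gl p l :=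
    { toFun := fun x i => χ i (x i)
      map_zero' := by funext i; simp
      map_add' := fun x y => by funext i; simp }
  have hΨmem : ∀ x, Ψ x ∈ aTors (p ^ j) (Gl p l) := by
    intro x
    show (p ^ j) • (Ψ x) = 0
    funext i
    show (p ^ j) • (χ i (x i)) = 0
    exact (hχrange i _).mp ⟨x i, rfl⟩
  let Ψ' := Ψ.codRestrict (aTors (p ^ j) (Gl p l)) hΨmem
  have hbij : Function.Bijective Ψ' := by
    constructor
    · intro x y hxy
      have : Ψ x = Ψ y := congrArg Subtype.val hxy
      exact funext fun i => hχinj i (congrFun this i)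
    · rintro ⟨x, hx⟩
      have hx' : ∀ i, (p ^ j) • x i = 0 := by
        intro i
        have := congrFun (mem_aTors.mp hx) i
        exact this
      choose y hy using fun i => (hχrange i (x i)).mpr (hx' i)
      exact ⟨y, Subtype.ext (funext fun i => hy i)⟩
  exact ⟨((AddEquiv.ofBijective Ψ' hbij).symm.trans (piReindex p l (fun a => min a j)))⟩

lemma Gl_finite {p : ℕ} (hp : p.Prime) (l : List ℕ) : Finite (Gl p l) := by
  haveI : ∀ i : Fin l.length, NeZero (p ^ l.get i) := fun i => ⟨pow_ne_zero _ hp.ne_zero⟩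
  infer_instance

lemma card_Gl {p : ℕ} (hp : p.Prime) (l : List ℕ) : Nat.card (Gl p l) = p ^ l.sum := by
  haveI : ∀ i : Fin l.length, NeZero (p ^ l.get i) := fun i => ⟨pow_ne_zero _ hp.ne_zero⟩
  rw [Nat.card_pi]
  have h1 : ∀ i : Fin l.length, Nat.card (ZMod (p ^ l.get i)) = p ^ l.get i :=
    fun i => Nat.card_zmod _
  rw [Finset.prod_congr rfl (fun i _ => h1 i), Finset.prod_pow_eq_pow_sum]
  congr 1
  have := Fin.sum_univ_getElem l
  simpa using this

section Counting

variable {p : ℕ} {G : Type*} [AddCommGroup G]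

lemma count_split {α : Type*} [Finite α] (P Q R : α → Prop)
    (h : ∀ x, P x ↔ (Q x ∨ R x)) (hdis : ∀ x, Q x → R x → False) :
    Nat.card {x : α // P x} = Nat.card {x : α // Q x} + Nat.card {x : α // R x} := by
  classical
  have e1 : {x : α // P x} ≃ {x : α // Q x ∨ R x} := Equiv.subtypeEquivRight h
  have e2 : {x : α // Q x ∨ R x} ≃ {x : α // Q x} ⊕ {x : α // R x} :=
    subtypeOrEquiv Q R (by
      intro S hSQ hSR x hx
      exact absurd (hdis x (hSQ x hx) (hSR x hx)) not_false)
  rw [Nat.card_congr (e1.trans e2), Nat.card_sum]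

lemma count_tors_succ (hp : p.Prime) [Finite G] (k : ℕ) :
    Nat.card {x : G // (p ^ (k + 1)) • x = 0}
      = Nat.card {x : G // (p ^ k) • x = 0} + Nat.card {x : G // addOrderOf x = p ^ (k + 1)} := by
  apply count_split
  · intro x
    constructor
    · intro hx
      have h1 : addOrderOf x ∣ p ^ (k + 1) := addOrderOf_dvd_of_nsmul_eq_zero hx
      obtain ⟨d, hd, hdeq⟩ := (Nat.dvd_prime_pow hp).mp h1
      rcases Nat.lt_or_ge d (k + 1) with hlt | hge
      · left
        apply addOrderOf_dvd_iff_nsmul_eq_zero.mp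
        rw [hdeq]
        exact pow_dvd_pow p (by omega)
      · right
        rw [hdeq]
        congr 1
        omega
    · rintro (hx | hx)
      · have h2 : (p ^ (k + 1)) • x = p • ((p ^ k) • x) := by
          rw [← mul_nsmul, pow_succ, mul_comm]
        rw [h2, hx, smul_zero]
      · exact addOrderOf_dvd_iff_nsmul_eq_zero.mp (by rw [hx])
  · intro x hQ hR
    have h1 : addOrderOf x ∣ p ^ k := addOrderOf_dvd_of_nsmul_eq_zero hQ
    rw [hR] at h1
    have h2 := Nat.le_of_dvd (pow_pos hp.pos k) h1
    have h3 : p ^ k < p ^ (k + 1) := Nat.pow_lt_pow_right hp.one_lt (by omega)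
    omega

lemma fiber_count (hp : p.Prime) {H : Type*} [AddCommGroup H] [Finite H] {k : ℕ}
    (hcard : Nat.card H = p ^ (k + 1)) (x : H) (hx : addOrderOf x = p ^ (k + 1)) :
    Nat.card {y : H // addOrderOf y = p ^ (k + 1)} = (p ^ (k + 1)).totient := by
  classical
  haveI : Fintype H := Fintype.ofFinite H
  haveI : IsAddCyclic H := isAddCyclic_of_addOrderOf_eq_card x (by rw [hx, hcard])
  have hd : p ^ (k + 1) ∣ Fintype.card H := by
    rw [← Nat.card_eq_fintype_card, hcard]
  have := IsAddCyclic.card_addOrderOf_eq_totient (α := H) hd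
  rw [Nat.card_eq_fintype_card, Fintype.card_subtype]
  convert this using 2

lemma zmultiples_eq_of_mem_of_card {K : AddSubgroup G} [Finite G] {x : G}
    (hx : x ∈ K) (hcard : Nat.card K = addOrderOf x) :
    AddSubgroup.zmultiples x = K := by
  have hle : AddSubgroup.zmultiples x ≤ K := by
    rwa [AddSubgroup.zmultiples_le]
  have hc : Nat.card (AddSubgroup.zmultiples x) = Nat.card K := by
    rw [Nat.card_zmultiples, hcard]
  apply SetLike.coe_injective
  apply Set.eq_of_subset_of_ncard_le hle
  · rw [← Nat.card_coe_set_eq, ← Nat.card_coe_set_eq]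
    simp only [SetLike.coe_sort_coe]
    omega

lemma count_order_eq (hp : p.Prime) [Finite G] (k : ℕ) :
    Nat.card {x : G // addOrderOf x = p ^ (k + 1)}
      = Nat.card {H : AddSubgroup G // Nat.card H = p ^ (k + 1) ∧ ¬ H ≤ aTors (p ^ k) G}
        * (p ^ (k + 1)).totient := by
  classical
  -- the map from the sigma type
  set T := {H : AddSubgroup G // Nat.card H = p ^ (k + 1) ∧ ¬ H ≤ aTors (p ^ k) G} with hT
  have hordnot : ∀ x : G, addOrderOf x = p ^ (k + 1) → ¬ (p ^ k) • x = 0 := by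
    intro x hx hk
    have h1 : addOrderOf x ∣ p ^ k := addOrderOf_dvd_of_nsmul_eq_zero hk
    rw [hx] at h1
    have h2 := Nat.le_of_dvd (pow_pos hp.pos k) h1
    have h3 : p ^ k < p ^ (k + 1) := Nat.pow_lt_pow_right hp.one_lt (by omega)
    omega
  let F : (Σ H : T, {y : H.1 // addOrderOf y = p ^ (k + 1)}) →
      {x : G // addOrderOf x = p ^ (k + 1)} :=
    fun z => ⟨(z.2.1 : G), by rw [AddSubgroup.addOrderOf_coe]; exact z.2.2⟩
  have hFbij : Function.Bijective F := by
    constructor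
    · rintro ⟨⟨H, hH⟩, y, hy⟩ ⟨⟨H', hH'⟩, y', hy'⟩ hxy
      have hval : (y : G) = (y' : G) := congrArg Subtype.val hxy
      have h1 : AddSubgroup.zmultiples (y : G) = H :=
        zmultiples_eq_of_mem_of_card y.2
          (by rw [hH.1, AddSubgroup.addOrderOf_coe, hy])
      have h2 : AddSubgroup.zmultiples (y' : G) = H' :=
        zmultiples_eq_of_mem_of_card y'.2
          (by rw [hH'.1, AddSubgroup.addOrderOf_coe, hy'])
      have hHH' : H = H' := by rw [← h1, ← h2, hval]
      subst hHH'
      have hyy' : y = y' := Subtype.ext hval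
      subst hyy'
      rfl
    · rintro ⟨x, hx⟩
      have hmem : x ∈ AddSubgroup.zmultiples x := AddSubgroup.mem_zmultiples x
      have hc : Nat.card (AddSubgroup.zmultiples x) = p ^ (k + 1) := by
        rw [Nat.card_zmultiples, hx]
      have hnle : ¬ AddSubgroup.zmultiples x ≤ aTors (p ^ k) G := by
        intro hle
        exact hordnot x hx (mem_aTors.mp (hle hmem))
      refine ⟨⟨⟨AddSubgroup.zmultiples x, hc, hnle⟩, ⟨⟨x, hmem⟩, ?_⟩⟩, rfl⟩
      rw [AddSubgroup.addOrderOf_mk]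
      exact hx
  rw [← Nat.card_congr (Equiv.ofBijective F hFbij)]
  haveI : Fintype G := Fintype.ofFinite G
  haveI : Fintype T := Fintype.ofFinite T
  rw [Nat.card_eq_fintype_card, Fintype.card_sigma]
  have hfib : ∀ H : T, Fintype.card {y : H.1 // addOrderOf y = p ^ (k + 1)}
      = (p ^ (k + 1)).totient := by
    intro H
    obtain ⟨x, hxmem, hxnot⟩ := SetLike.not_le_iff_exists.mp H.2.2
    have hxord : addOrderOf x = p ^ (k + 1) := by
      have h1 : addOrderOf x ∣ p ^ (k + 1) := by
        rw [← H.2.1]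
        exact AddSubgroup.addOrderOf_dvd_natCard H.1 hxmem
      obtain ⟨d, hd, hdeq⟩ := (Nat.dvd_prime_pow hp).mp h1
      rcases Nat.lt_or_ge d (k + 1) with hlt | hge
      · exfalso
        apply hxnot
        rw [mem_aTors]
        apply addOrderOf_dvd_iff_nsmul_eq_zero.mp
        rw [hdeq]
        exact pow_dvd_pow p (by omega)
      · rw [hdeq]; congr 1; omega
    rw [← Nat.card_eq_fintype_card]
    exact fiber_count hp H.2.1 ⟨x, hxmem⟩ (by rw [AddSubgroup.addOrderOf_mk]; exact hxord)
  rw [Finset.sum_congr rfl (fun H _ => hfib H), Finset.sum_const, Finset.card_univ,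
    Nat.card_eq_fintype_card, smul_eq_mul]

lemma subgroup_count_split [Finite G] (c : ℕ) (K : AddSubgroup G) :
    Nat.card {H : AddSubgroup G // Nat.card H = c}
      = Nat.card {H : AddSubgroup G // Nat.card H = c ∧ H ≤ K}
        + Nat.card {H : AddSubgroup G // Nat.card H = c ∧ ¬ H ≤ K} := by
  apply count_split
  · intro H
    constructor
    · intro hH
      by_cases hle : H ≤ K
      · exact Or.inl ⟨hH, hle⟩
      · exact Or.inr ⟨hH, hle⟩
    · rintro (⟨hH, _⟩ | ⟨hH, _⟩) <;> exact hH
  · rintro H ⟨_, hle⟩ ⟨_, hnle⟩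
    exact hnle hle

def subgroupOfCardEquiv (c : ℕ) (K : AddSubgroup G) :
    {H : AddSubgroup G // Nat.card H = c ∧ H ≤ K} ≃ {H : AddSubgroup K // Nat.card H = c} where
  toFun H := ⟨H.1.addSubgroupOf K, by
    rw [Nat.card_congr (AddSubgroup.addSubgroupOfEquivOfLe H.2.2).toEquiv]
    exact H.2.1⟩
  invFun H := ⟨H.1.map K.subtype, by
    constructor
    · rw [(Nat.card_congr (AddSubgroup.equivMapOfInjective H.1 K.subtype
        K.subtype_injective).toEquiv).symm]
      exact H.2
    · exact AddSubgroup.map_subtype_le H.1⟩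
  left_inv H := by
    apply Subtype.ext
    simp only [AddSubgroup.addSubgroupOf]
    rw [AddSubgroup.map_comap_eq]
    rw [AddSubgroup.range_subtype]
    exact inf_eq_right.mpr H.2.2
  right_inv H := by
    apply Subtype.ext
    simp only [AddSubgroup.addSubgroupOf]
    exact AddSubgroup.comap_map_eq_self_of_injective K.subtype_injective H.1

end Counting

-- NEW: the step lemma
section Step
variable {p : ℕ}

lemma card_subtype_tors (n : ℕ) (G : Type*) [AddCommGroup G] :
    Nat.card (aTors n G) = Nat.card {x : G // n • x = 0} := rfl

lemma step_lemma (hp : p.Prime) {G G' : Type*} [AddCommGroup G] [AddCommGroup G']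
    [Finite G] [Finite G'] (k : ℕ)
    (e : (aTors (p ^ k) G) ≃+ (aTors (p ^ k) G'))
    (hN : nkk G (p ^ (k + 1)) = nkk G' (p ^ (k + 1))) :
    Nat.card {x : G // (p ^ (k + 1)) • x = 0} = Nat.card {x : G' // (p ^ (k + 1)) • x = 0} := by
  classical
  set c := p ^ (k + 1) with hc
  -- the number of subgroups of order c inside the torsion subgroups agree
  have hA : Nat.card {H : AddSubgroup G // Nat.card H = c ∧ H ≤ aTors (p ^ k) G}
      = Nat.card {H : AddSubgroup G' // Nat.card H = c ∧ H ≤ aTors (p ^ k) G'} := by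
    rw [Nat.card_congr (subgroupOfCardEquiv c (aTors (p ^ k) G)),
      Nat.card_congr (subgroupOfCardEquiv c (aTors (p ^ k) G'))]
    exact nkk_congr e c
  -- hence the number of "cyclic" subgroups agree
  have hsplit := subgroup_count_split (G := G) c (aTors (p ^ k) G)
  have hsplit' := subgroup_count_split (G := G') c (aTors (p ^ k) G')
  have hnkk : nkk G c = nkk G' c := hN
  have hB : Nat.card {H : AddSubgroup G // Nat.card H = c ∧ ¬ H ≤ aTors (p ^ k) G}
      = Nat.card {H : AddSubgroup G' // Nat.card H = c ∧ ¬ H ≤ aTors (p ^ k) G'} := by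
    have h1 : nkk G c = _ := hsplit
    have h2 : nkk G' c = _ := hsplit'
    omega
  -- so the number of elements of order exactly c agree
  have hE : Nat.card {x : G // addOrderOf x = c}
      = Nat.card {x : G' // addOrderOf x = c} := by
    rw [hc, count_order_eq hp k, count_order_eq hp k, ← hc, hB]
  -- and the number of p^k-torsion elements agree
  have hT : Nat.card {x : G // (p ^ k) • x = 0} = Nat.card {x : G' // (p ^ k) • x = 0} := by
    rw [← card_subtype_tors, ← card_subtype_tors]
    exact Nat.card_congr e.toEquiv
  rw [count_tors_succ hp k, count_tors_succ hp k, hT, hc] at *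
  omega
end Step


def addEquivOfSubsingleton {A B : Type*} [AddCommGroup A] [AddCommGroup B]
    [Subsingleton A] [Subsingleton B] : A ≃+ B where
  toFun _ := 0
  invFun _ := 0
  left_inv a := Subsingleton.elim _ _
  right_inv b := Subsingleton.elim _ _
  map_add' _ _ := by simp

lemma sum_map_min_succ (l : List ℕ) (k : ℕ) :
    (l.map (fun a => min a (k + 1))).sum
      = (l.map (fun a => min a k)).sum + l.countP (fun a => decide (k + 1 ≤ a)) := by
  induction l with
  | nil => simp
  | cons a t ih =>
    simp only [List.map_cons, List.sum_cons, List.countP_cons]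
    by_cases h : k + 1 ≤ a
    · have h1 : min a (k + 1) = k + 1 := min_eq_right h
      have h2 : min a k = k := min_eq_right (by omega)
      simp [h1, h2, h, ih]
      omega
    · have h3 : a ≤ k := by omega
      simp [min_eq_left h3, min_eq_left (show a ≤ k + 1 by omega), h, ih]
      omega

lemma sorted_head_le {a : ℕ} {t : List ℕ} (h : (a :: t).Pairwise (· ≥ ·)) :
    ∀ x ∈ a :: t, x ≤ a := by
  intro x hx
  rcases List.mem_cons.mp hx with rfl | hx
  · exact le_refl x
  · exact (List.pairwise_cons.mp h).1 x hx

lemma map_min_eq_self {l : List ℕ} {c : ℕ} (h : ∀ x ∈ l, x ≤ c) :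
    l.map (fun a => min a c) = l := by
  rw [List.map_congr_left (fun a ha => min_eq_left (h a ha)), List.map_id']

lemma trunc_succ {k : ℕ} : ∀ (l m : List ℕ), l.Pairwise (· ≥ ·) → m.Pairwise (· ≥ ·) →
    l.map (fun a => min a k) = m.map (fun a => min a k) →
    l.countP (fun a => decide (k + 1 ≤ a)) = m.countP (fun a => decide (k + 1 ≤ a)) →
    l.map (fun a => min a (k + 1)) = m.map (fun a => min a (k + 1))
  | [], [], _, _, _, _ => by simp
  | [], (b :: m'), _, _, hmap, _ => by simp at hmap
  | (a :: l'), [], _, _, hmap, _ => by simp at hmap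
  | (a :: l'), (b :: m'), hsl, hsm, hmap, hcnt => by
    simp only [List.map_cons, List.cons.injEq] at hmap
    obtain ⟨hmin, htail⟩ := hmap
    by_cases ha : k + 1 ≤ a <;> by_cases hb : k + 1 ≤ b
    · -- both large
      simp only [List.map_cons, List.cons.injEq]
      refine ⟨by rw [min_eq_right ha, min_eq_right hb], ?_⟩
      apply trunc_succ l' m' (List.pairwise_cons.mp hsl).2 (List.pairwise_cons.mp hsm).2 htail
      rw [List.countP_cons, List.countP_cons] at hcnt
      simp only [ha, hb, decide_true, ite_true, if_true, eq_self_iff_true] at hcnt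
      omega
    · -- a large, b small : contradiction via counts
      exfalso
      have hb' : b ≤ k := by omega
      have hbk : b = k := by
        have h1 : min a k = k := min_eq_right (by omega)
        have h2 : min b k = b := min_eq_left hb'
        omega
      have hm0 : (b :: m').countP (fun a => decide (k + 1 ≤ a)) = 0 := by
        apply List.countP_eq_zero.mpr
        intro x hx
        have := sorted_head_le hsm x hx
        simp only [decide_eq_true_eq]
        omega
      have hl1 : 0 < (a :: l').countP (fun a => decide (k + 1 ≤ a)) := by
        apply List.countP_pos_iff.mpr
        exact ⟨a, List.mem_cons_self, by simp [ha]⟩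
      omega
    · -- a small, b large : symmetric
      exfalso
      have ha' : a ≤ k := by omega
      have hak : a = k := by
        have h1 : min b k = k := min_eq_right (by omega)
        have h2 : min a k = a := min_eq_left ha'
        omega
      have hm0 : (a :: l').countP (fun a => decide (k + 1 ≤ a)) = 0 := by
        apply List.countP_eq_zero.mpr
        intro x hx
        have := sorted_head_le hsl x hx
        simp only [decide_eq_true_eq]
        omega
      have hl1 : 0 < (b :: m').countP (fun a => decide (k + 1 ≤ a)) := by
        apply List.countP_pos_iff.mpr
        exact ⟨b, List.mem_cons_self, by simp [hb]⟩
      omega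
    · -- both small : lists are equal
      have hle : ∀ x ∈ a :: l', x ≤ k := fun x hx => le_trans (sorted_head_le hsl x hx) (by omega)
      have hle' : ∀ x ∈ b :: m', x ≤ k := fun x hx => le_trans (sorted_head_le hsm x hx) (by omega)
      have hlm : (a :: l') = (b :: m') := by
        rw [← map_min_eq_self hle, ← map_min_eq_self hle']
        simp only [List.map_cons, List.cons.injEq]
        exact ⟨hmin, htail⟩
      rw [hlm]

lemma mem_le_sum {l : List ℕ} {a : ℕ} (h : a ∈ l) : a ≤ l.sum := by
  induction l with
  | nil => simp at h
  | cons b t ih =>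
    rcases List.mem_cons.mp h with rfl | h
    · simp [List.sum_cons]
    · have := ih h
      simp only [List.sum_cons]
      omega

lemma sum_map_min_one {l : List ℕ} (hpos : ∀ x ∈ l, 0 < x) :
    (l.map (fun a => min a 1)).sum = l.length := by
  induction l with
  | nil => simp
  | cons a t ih =>
    have ha : 0 < a := hpos a (List.mem_cons_self)
    have h1 : min a 1 = 1 := min_eq_right ha
    simp only [List.map_cons, List.sum_cons, List.length_cons, h1]
    rw [ih (fun x hx => hpos x (List.mem_cons_of_mem a hx))]
    omega

lemma map_min_zero (l : List ℕ) : l.map (fun a => min a 0) = List.replicate l.length 0 := by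
  induction l with
  | nil => simp
  | cons a t ih => simp [List.replicate_succ, ih]

def glCongr (p : ℕ) {l₁ l₂ : List ℕ} (h : l₁ = l₂) : Gl p l₁ ≃+ Gl p l₂ := by
  subst h; exact AddEquiv.refl _

lemma subsingleton_aTors_pow_zero (p : ℕ) (G : Type*) [AddCommGroup G] :
    Subsingleton (aTors (p ^ 0) G) := by
  constructor
  rintro ⟨a, ha⟩ ⟨b, hb⟩
  have ha' : a = 0 := by
    have := mem_aTors.mp ha
    rwa [pow_zero, one_smul] at this
  have hb' : b = 0 := by
    have := mem_aTors.mp hb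
    rwa [pow_zero, one_smul] at this
  exact Subtype.ext (ha'.trans hb'.symm)

/-- If two partitions `λ, μ` satisfy `N_k(λ; p) = N_k(μ; p)` for every `k`
(i.e. `ζ_λ(s) = ζ_μ(s)`), then `λ = μ`:  the zeta function determines `λ`. -/
theorem stmt_16 (p : ℕ) (hp : p.Prime) (l m : List ℕ)
    (hsortl : l.Pairwise (· ≥ ·)) (hposl : ∀ x ∈ l, 0 < x)
    (hsortm : m.Pairwise (· ≥ ·)) (hposm : ∀ x ∈ m, 0 < x)
    (h : ∀ k : ℕ, Nk p l k = Nk p m k) :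
    l = m := by
  classical
  haveI hFl : Finite (Gl p l) := Gl_finite hp l
  haveI hFm : Finite (Gl p m) := Gl_finite hp m
  have hNk : ∀ k, nkk (Gl p l) (p ^ k) = nkk (Gl p m) (p ^ k) := fun k => h k
  have hcardT : ∀ (l' : List ℕ), (∀ x ∈ l', 0 < x) → ∀ j : ℕ,
      Nat.card {x : Gl p l' // (p ^ j) • x = 0} = p ^ ((l'.map (fun a => min a j)).sum) := by
    intro l' _ j
    rw [← card_subtype_tors, Nat.card_congr (omega_iso hp l' j).some.toEquiv]
    exact card_Gl hp _
  have hstep : ∀ k : ℕ, (aTors (p ^ k) (Gl p l) ≃+ aTors (p ^ k) (Gl p m)) →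
      (l.map (fun a => min a (k + 1))).sum = (m.map (fun a => min a (k + 1))).sum := by
    intro k e
    have h1 := step_lemma hp k e (hNk (k + 1))
    rw [hcardT l hposl (k + 1), hcardT m hposm (k + 1)] at h1
    exact Nat.pow_right_injective hp.two_le h1
  have e0 : aTors (p ^ 0) (Gl p l) ≃+ aTors (p ^ 0) (Gl p m) := by
    haveI := subsingleton_aTors_pow_zero p (Gl p l)
    haveI := subsingleton_aTors_pow_zero p (Gl p m)
    exact addEquivOfSubsingleton
  have hlen : l.length = m.length := by
    have h2 := hstep 0 e0
    rwa [sum_map_min_one hposl, sum_map_min_one hposm] at h2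
  have main : ∀ k, l.map (fun a => min a k) = m.map (fun a => min a k) := by
    intro k
    induction k with
    | zero =>
      rw [map_min_zero, map_min_zero, hlen]
    | succ k ih =>
      have e : aTors (p ^ k) (Gl p l) ≃+ aTors (p ^ k) (Gl p m) :=
        (omega_iso hp l k).some.trans ((glCongr p ih).trans (omega_iso hp m k).some.symm)
      have hsum := hstep k e
      have hcnt : l.countP (fun a => decide (k + 1 ≤ a))
          = m.countP (fun a => decide (k + 1 ≤ a)) := by
        have h4 := sum_map_min_succ l k
        have h5 := sum_map_min_succ m k
        have h6 : (l.map (fun a => min a k)).sum = (m.map (fun a => min a k)).sum :=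
          congrArg List.sum ih
        omega
      exact trunc_succ l m hsortl hsortm ih hcnt
  have hKl : ∀ a ∈ l, a ≤ l.sum + m.sum := fun a ha =>
    le_trans (mem_le_sum ha) (Nat.le_add_right _ _)
  have hKm : ∀ a ∈ m, a ≤ l.sum + m.sum := fun a ha =>
    le_trans (mem_le_sum ha) (Nat.le_add_left _ _)
  have hfin := main (l.sum + m.sum)
  rwa [map_min_eq_self hKl, map_min_eq_self hKm] at hfin
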